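/- For every n ≥ 1 and every profile x ∈ [0,1]^n there exists β ∈ [0,1] such that (i) β(1 − x_i) + (1 − β)x_i ≥ 1/(2n) for every agent i, and (ii) sup_{z ∈ [0,1]} ∑_i |z − x_i| ≤ (12/11) · (β(n − ∑_i x_i) + (1 − β)∑_i x_i). Moreover, the constant 12/11 is tight: there exist n and a profile x (namely n = 3, x = (0, 1, 1)) such that for every β ∈ [0,1] satisfying (i), sup_{z ∈ [0,1]} ∑_i |z − x_i| ≥ (12/11) · (β(n − ∑_i x_i) + (1 − β)∑_i x_i). Hence in the randomized setting the price of 2-IFS for utilitarian welfare is 12/11. -/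

import Mathlib

private lemma sum_one_sub' (n : ℕ) (x : Fin n → ℝ) :
    ∑ i, (1 - x i) = (n : ℝ) - ∑ i, x i := by
  rw [Finset.sum_sub_distrib, Finset.sum_const, Finset.card_univ, Fintype.card_fin,
    nsmul_eq_mul, mul_one]

private lemma abs_conv' {z t : ℝ} (hz : z ∈ Set.Icc (0:ℝ) 1) (ht : t ∈ Set.Icc (0:ℝ) 1) :
    |z - t| ≤ (1 - z) * t + z * (1 - t) := by
  obtain ⟨hz0, hz1⟩ := hz
  obtain ⟨ht0, ht1⟩ := ht
  apply abs_le.mpr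
  constructor <;> nlinarith

private lemma sup_le_max' (n : ℕ) (x : Fin n → ℝ) (hx : ∀ i, x i ∈ Set.Icc (0:ℝ) 1) :
    sSup ((fun z => ∑ i, |z - x i|) '' Set.Icc (0:ℝ) 1) ≤
      max (∑ i, x i) ((n:ℝ) - ∑ i, x i) := by
  have hS0 : 0 ≤ ∑ i, x i := Finset.sum_nonneg fun i _ => (hx i).1
  apply Real.sSup_le
  · rintro y ⟨z, hz, rfl⟩
    have h1 : ∑ i, |z - x i| ≤ ∑ i, ((1-z) * x i + z * (1 - x i)) :=
      Finset.sum_le_sum fun i _ => abs_conv' hz (hx i)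
    have heq : ∑ i, ((1-z) * x i + z * (1 - x i))
        = (1-z) * (∑ i, x i) + z * ((n:ℝ) - ∑ i, x i) := by
      rw [Finset.sum_add_distrib, ← Finset.mul_sum, ← Finset.mul_sum, sum_one_sub']
    have hM1 : (∑ i, x i) ≤ max (∑ i, x i) ((n:ℝ) - ∑ i, x i) := le_max_left _ _
    have hM2 : ((n:ℝ) - ∑ i, x i) ≤ max (∑ i, x i) ((n:ℝ) - ∑ i, x i) := le_max_right _ _
    have hz0 := hz.1
    have hz1 := hz.2
    nlinarith [h1, heq]
  · exact le_trans hS0 (le_max_left _ _)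
set_option maxHeartbeats 1000000

private lemma half_case (n : ℕ) (x : Fin n → ℝ) (hn : 1 ≤ n)
    (hx : ∀ i, x i ∈ Set.Icc (0:ℝ) 1) (hhalf : 2 * (∑ i, x i) ≤ (n:ℝ)) :
    ∃ β ∈ Set.Icc (0:ℝ) 1,
      (∀ i, 1/(2*(n:ℝ)) ≤ β*(1 - x i) + (1-β)*(x i)) ∧
      max (∑ i, x i) ((n:ℝ) - ∑ i, x i) ≤
        (12/11) * (β*((n:ℝ) - ∑ i, x i) + (1-β)*(∑ i, x i)) := by
  have hne : Nonempty (Fin n) := ⟨⟨0, hn⟩⟩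
  set N : ℝ := (n:ℝ) with hN
  set S : ℝ := ∑ i, x i with hSdef
  have hN1 : (1:ℝ) ≤ N := by rw [hN]; exact_mod_cast hn
  have hNpos : (0:ℝ) < N := by linarith
  have hS0 : 0 ≤ S := Finset.sum_nonneg fun i _ => (hx i).1
  obtain ⟨i0, -, hmax⟩ := Finset.exists_max_image Finset.univ x Finset.univ_nonempty
  set m : ℝ := x i0 with hmdef
  have hm0 : 0 ≤ m := (hx i0).1
  have hm1 : m ≤ 1 := (hx i0).2
  have hmS : m ≤ S := Finset.single_le_sum (fun i _ => (hx i).1) (Finset.mem_univ i0)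
  have hc2 : 1/(2*N) ≤ 1/2 := by
    rw [div_le_div_iff₀ (by linarith) (by norm_num)]; linarith
  have hcpos : 0 < 1/(2*N) := by positivity
  rcases le_or_gt m (1 - 1/(2*N)) with hcase | hcase
  · -- β = 1
    refine ⟨1, ⟨zero_le_one, le_refl 1⟩, fun i => ?_, ?_⟩
    · have := hmax i (Finset.mem_univ i)
      have hxi := (hx i).2
      nlinarith
    · have hNS : S ≤ N - S := by linarith
      apply max_le (by linarith)
      nlinarith
  · -- β = (m - c)/(2m - 1)
    have hm12 : (1:ℝ)/2 < m := by linarith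
    have h2m : (0:ℝ) < 2*m - 1 := by linarith
    set β : ℝ := (m - 1/(2*N)) / (2*m - 1) with hβdef
    have hβeq : β * (2*m - 1) = m - 1/(2*N) := div_mul_cancel₀ _ (ne_of_gt h2m)
    have hβ2 : β * (2*m - 1) * (2*N) = 2*N*m - 1 := by
      rw [hβeq]; field_simp
    have hβhalf : 1/2 ≤ β := by
      rw [hβdef, le_div_iff₀ h2m]; nlinarith
    have hβ1 : β ≤ 1 := by
      rw [hβdef, div_le_one h2m]; linarith
    have hβ0 : 0 ≤ β := by linarith
    have hn1 : 1 < n := by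
      have hNgt1 : (1:ℝ) < N := by linarith
      rw [hN] at hNgt1; exact_mod_cast hNgt1
    have hN2 : (2:ℝ) ≤ N := by rw [hN]; exact_mod_cast hn1
    refine ⟨β, ⟨hβ0, hβ1⟩, fun i => ?_, ?_⟩
    · -- constraint
      have hkey : β*(1 - x i) + (1-β)*(x i) - 1/(2*N) = (m - x i)*(2*β - 1) := by
        linear_combination -hβeq
      have hprod : 0 ≤ (m - x i)*(2*β - 1) :=
        mul_nonneg (by linarith [hmax i (Finset.mem_univ i)]) (by linarith)
      linarith
    · -- welfare
      have hme : 2*N - 1 ≤ 2*N*m := by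
        have h' := mul_le_mul_of_nonneg_left (le_of_lt hcase) (by linarith : (0:ℝ) ≤ 2*N)
        calc 2*N - 1 = 2*N*(1 - 1/(2*N)) := by field_simp
          _ ≤ 2*N*m := h'
      have hG : 0 ≤ 22*m*S*N + 11*N^2 + 12*S - 10*m*N^2 - 23*S*N - 6*N := by
        rcases le_or_gt (22*m*N + 12 - 23*N) 0 with hA | hA
        · have p1 : 0 ≤ (-(22*m*N + 12 - 23*N)) * (N - 2*S) :=
            mul_nonneg (by linarith) (by linarith)
          have p2 : 0 ≤ N * (N*(2*m - 1)) :=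
            mul_nonneg (by linarith) (mul_nonneg (by linarith) (by linarith))
          linarith [p1, p2]
        · rcases lt_or_ge n 3 with h | h
          · have hn2' : n = 2 := by omega
            have hN2' : N = 2 := by rw [hN, hn2']; norm_num
            rw [hN2'] at hA hhalf ⊢
            nlinarith [mul_nonneg hA.le (by linarith : (0:ℝ) ≤ S - m),
              sq_nonneg (44*m - 37)]
          · have hN3 : (3:ℝ) ≤ N := by rw [hN]; exact_mod_cast h
            have hI : 0 ≤ (N - 3)*(N - 4) := by
              rcases le_or_gt n 3 with h3 | h4
              · have : n = 3 := by omega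
                rw [hN, this]; norm_num
              · have h4' : (4:ℝ) ≤ N := by rw [hN]; exact_mod_cast h4
                nlinarith
            have q1 : 0 ≤ (22*m*N + 12 - 23*N) * (S - m) :=
              mul_nonneg hA.le (by linarith)
            have q2 : 0 ≤ (1 - m) * (10*N^2 - 21*N - 12) :=
              mul_nonneg (by linarith) (by nlinarith [sq_nonneg (N - 3)])
            have q3 : 0 ≤ 22*N * (1 - m)^2 :=
              mul_nonneg (by linarith) (sq_nonneg _)
            linarith [q1, q2, q3, hI]
      have hβ3 : β*(N - 2*S)*((2*m - 1)*(2*N)) = (2*N*m - 1)*(N - 2*S) := by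
        linear_combination (N - 2*S)*hβ2
      have hP : (0:ℝ) < (2*m - 1)*(2*N) := mul_pos h2m (by linarith)
      have hmain : 11*(N - S)*((2*m-1)*(2*N)) ≤ (12*(S + β*(N - 2*S)))*((2*m-1)*(2*N)) := by
        linarith [hG, hβ3]
      have h11 : 11*(N - S) ≤ 12*(S + β*(N - 2*S)) := le_of_mul_le_mul_right hmain hP
      have hWeq : β*(N - S) + (1-β)*S = S + β*(N - 2*S) := by ring
      apply max_le
      · rw [hWeq]; linarith
      · rw [hWeq]; linarith

/-- In the randomized setting the price of 2-IFS for utilitarian welfare is 12/11: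
for every profile some two-point randomized placement satisfying 2-IFS in
expectation achieves at least 11/12 of the optimal utilitarian welfare, and this
constant is tight. -/
theorem randomized_two_IFS_price_of_fairness :
    (∀ (n : ℕ) (x : Fin n → ℝ), 1 ≤ n → (∀ i, x i ∈ Set.Icc (0:ℝ) 1) →
      ∃ β ∈ Set.Icc (0:ℝ) 1,
        (∀ i, 1/(2*(n:ℝ)) ≤ β*(1 - x i) + (1-β)*(x i)) ∧
        sSup ((fun z => ∑ i, |z - x i|) '' Set.Icc (0:ℝ) 1) ≤
          (12/11) * (β*((n:ℝ) - ∑ i, x i) + (1-β)*(∑ i, x i))) ∧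
    (∃ (n : ℕ) (x : Fin n → ℝ), 1 ≤ n ∧ (∀ i, x i ∈ Set.Icc (0:ℝ) 1) ∧
      ∀ β ∈ Set.Icc (0:ℝ) 1,
        (∀ i, 1/(2*(n:ℝ)) ≤ β*(1 - x i) + (1-β)*(x i)) →
        (12/11) * (β*((n:ℝ) - ∑ i, x i) + (1-β)*(∑ i, x i)) ≤
          sSup ((fun z => ∑ i, |z - x i|) '' Set.Icc (0:ℝ) 1)) := by
  constructor
  · intro n x hn hx
    have hsup := sup_le_max' n x hx
    rcases le_or_gt (2 * (∑ i, x i)) (n:ℝ) with hhalf | hhalf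
    · obtain ⟨β, hβmem, hcon, hwel⟩ := half_case n x hn hx hhalf
      exact ⟨β, hβmem, hcon, le_trans hsup hwel⟩
    · -- mirror: apply half_case to 1 - x
      set x' : Fin n → ℝ := fun i => 1 - x i with hx'def
      have hx' : ∀ i, x' i ∈ Set.Icc (0:ℝ) 1 := fun i =>
        ⟨by simp [hx'def]; linarith [(hx i).2], by simp [hx'def]; linarith [(hx i).1]⟩
      have hS' : (∑ i, x' i) = (n:ℝ) - ∑ i, x i := sum_one_sub' n x
      have hhalf' : 2 * (∑ i, x' i) ≤ (n:ℝ) := by rw [hS']; linarith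
      obtain ⟨β', hβ'mem, hcon', hwel'⟩ := half_case n x' hn hx' hhalf'
      refine ⟨1 - β', ⟨by linarith [hβ'mem.2], by linarith [hβ'mem.1]⟩, fun i => ?_, ?_⟩
      · have := hcon' i
        simp only [hx'def] at this
        linarith [this]
      · rw [hS'] at hwel'
        have hmaxeq : max ((n:ℝ) - ∑ i, x i) ((n:ℝ) - ((n:ℝ) - ∑ i, x i))
            = max (∑ i, x i) ((n:ℝ) - ∑ i, x i) := by
          rw [max_comm]; ring_nf
        rw [hmaxeq] at hwel'
        have heqW : β'*((n:ℝ) - ((n:ℝ) - ∑ i, x i)) + (1-β')*((n:ℝ) - ∑ i, x i)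
            = (1-β')*((n:ℝ) - ∑ i, x i) + (1-(1-β'))*(∑ i, x i) := by ring
        rw [heqW] at hwel'
        exact le_trans hsup hwel'
  · -- tightness: n = 3, x = (0, 1, 1)
    refine ⟨3, ![0, 1, 1], by norm_num, ?_, ?_⟩
    · intro i; fin_cases i <;> norm_num
    · intro β hβ hcon
      have hβ16 : (1:ℝ)/6 ≤ β := by
        have := hcon 0
        norm_num at this
        linarith
      have hsum : (∑ i, (![0, 1, 1] : Fin 3 → ℝ) i) = 2 := by
        simp [Fin.sum_univ_three]; norm_num
      have hmem : (2:ℝ) ∈ ((fun z => ∑ i, |z - (![0, 1, 1] : Fin 3 → ℝ) i|) ''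
          Set.Icc (0:ℝ) 1) := by
        refine ⟨0, ⟨le_refl 0, zero_le_one⟩, ?_⟩
        norm_num [Fin.sum_univ_three, Matrix.cons_val_two]
      have hbdd : BddAbove ((fun z => ∑ i, |z - (![0, 1, 1] : Fin 3 → ℝ) i|) ''
          Set.Icc (0:ℝ) 1) := by
        refine ⟨3, ?_⟩
        rintro y ⟨z, hz, rfl⟩
        have h0 : |z - (0:ℝ)| ≤ 1 := by rw [abs_le]; constructor <;> linarith [hz.1, hz.2]
        have h1 : |z - (1:ℝ)| ≤ 1 := by rw [abs_le]; constructor <;> linarith [hz.1, hz.2]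
        calc (∑ i, |z - (![0, 1, 1] : Fin 3 → ℝ) i|)
            = |z - 0| + |z - 1| + |z - 1| := by simp [Fin.sum_univ_three]
          _ ≤ 3 := by linarith
      have hsup2 : (2:ℝ) ≤ sSup ((fun z => ∑ i, |z - (![0, 1, 1] : Fin 3 → ℝ) i|) ''
          Set.Icc (0:ℝ) 1) := le_csSup hbdd hmem
      rw [hsum]
      push_cast
      linarith
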